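/- Let ω ∈ (0,1), let s ≥ 1, let a_1,…,a_s and b_1,…,b_s be positive reals, let m_1,…,m_s be positive integers, set V := {h ∈ ℤ^s : −m_j/2 < h_j ≤ m_j/2 for all j} and n := ∏_{j=1}^s m_j. Then ∑_{h ∈ ℤ^s ∖ V} ω_h ≤ n · (−1 + ∏_{j=1}^s (1 + 2 ∑_{h=1}^∞ (√ω)^{a_j 2^{−b_j} (m_j h)^{b_j}})). -/

import Mathlib

lemma aux_summable_exp {c p : ℝ} (hc : 0 < c) (hp : 0 < p) :
    Summable fun n : ℕ => Real.exp (-(c * (n : ℝ) ^ p)) := by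
  obtain ⟨K, hK⟩ : ∃ K : ℕ, 2 ≤ p * K := by
    refine ⟨⌈2 / p⌉₊, ?_⟩
    have h1 : 2 / p ≤ (⌈2 / p⌉₊ : ℝ) := Nat.le_ceil _
    calc (2:ℝ) = p * (2 / p) := by field_simp
    _ ≤ p * ⌈2 / p⌉₊ := by nlinarith
  have hK0 : 0 < K := by
    rcases Nat.eq_zero_or_pos K with h | h
    · subst h; norm_num at hK
    · exact h
  rw [← summable_nat_add_iff 1]
  have hbig : Summable fun n : ℕ => ((K:ℝ)/c) ^ K * (((n:ℝ)+1) ^ (-(2:ℝ))) := by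
    apply Summable.mul_left
    have h0 : Summable fun n : ℕ => ((n:ℝ)) ^ (-(2:ℝ)) := Real.summable_nat_rpow.mpr (by norm_num)
    have h1 := (summable_nat_add_iff 1).mpr h0
    refine h1.congr fun n => ?_
    push_cast
    ring_nf
  refine Summable.of_nonneg_of_le (fun n => (Real.exp_pos _).le) (fun n => ?_) hbig
  push_cast
  set x : ℝ := (n:ℝ) + 1 with hx
  have hx1 : (1:ℝ) ≤ x := by
    have : (0:ℝ) ≤ n := Nat.cast_nonneg n
    simp [hx]
  have hx0 : (0:ℝ) < x := by linarith
  have hxp : 0 < x ^ p := Real.rpow_pos_of_pos hx0 p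
  have hy : 0 < c * x ^ p := mul_pos hc hxp
  have hexp : (c * x ^ p / K) ^ K ≤ Real.exp (c * x ^ p) := by
    calc (c * x ^ p / K) ^ K ≤ Real.exp (c * x ^ p / K) ^ K := by
          apply pow_le_pow_left₀ (by positivity)
          linarith [Real.add_one_le_exp (c * x ^ p / K)]
      _ = Real.exp (c * x ^ p) := by
          rw [← Real.exp_nat_mul]; congr 1; field_simp
  have h2 : Real.exp (-(c * x ^ p)) ≤ ((K:ℝ) / (c * x ^ p)) ^ K := by
    rw [Real.exp_neg]
    rw [show ((K:ℝ)/(c * x^p))^K = ((c * x^p / K)^K)⁻¹ by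
      rw [← inv_pow]; congr 1; rw [inv_div]]
    exact inv_anti₀ (by positivity) hexp
  have h3 : ((K:ℝ) / (c * x ^ p)) ^ K = ((K:ℝ)/c) ^ K * x ^ (-(p * K)) := by
    have e1 : ((K:ℝ) / (c * x ^ p)) = ((K:ℝ)/c) * (x ^ p)⁻¹ := by field_simp
    rw [e1, mul_pow]
    congr 1
    rw [inv_pow, ← Real.rpow_natCast (x ^ p) K, ← Real.rpow_mul hx0.le, ← Real.rpow_neg hx0.le]
  have h4 : x ^ (-(p*(K:ℝ))) ≤ x ^ (-(2:ℝ)) := Real.rpow_le_rpow_of_exponent_le hx1 (by linarith)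
  calc Real.exp (-(c * x ^ p)) ≤ ((K:ℝ) / (c * x ^ p)) ^ K := h2
    _ = ((K:ℝ)/c) ^ K * x ^ (-(p * K)) := h3
    _ ≤ ((K:ℝ)/c) ^ K * x ^ (-(2:ℝ)) := by
        apply mul_le_mul_of_nonneg_left _ (by positivity)
        exact_mod_cast h4

lemma aux_summable_int {r c p : ℝ} (hr0 : 0 < r) (hr1 : r < 1) (hc : 0 < c) (hp : 0 < p) :
    Summable fun t : ℤ => r ^ (c * |(t:ℝ)| ^ p) := by
  have hlog : 0 < -Real.log r := by
    have := Real.log_neg hr0 hr1; linarith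
  have key : ∀ t : ℤ, r ^ (c * |(t:ℝ)| ^ p) = Real.exp (-(((-Real.log r) * c) * |(t:ℝ)| ^ p)) := by
    intro t
    rw [Real.rpow_def_of_pos hr0]
    congr 1
    ring
  have base := aux_summable_exp (mul_pos hlog hc) hp
  rw [funext key]
  apply Summable.of_nat_of_neg
  · refine base.congr fun n => ?_
    norm_num
  · refine base.congr fun n => ?_
    norm_num

set_option maxHeartbeats 1000000 in
lemma aux_tsum_int {r c p : ℝ} (hr0 : 0 < r) (hr1 : r < 1) (hc : 0 < c) (hp : 0 < p) :
    ∑' t : ℤ, r ^ (c * |(t:ℝ)| ^ p) = 1 + 2 * ∑' k : ℕ, r ^ (c * ((k:ℝ) + 1) ^ p) := by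
  have hsum := aux_summable_int hr0 hr1 hc hp
  have hnat : Summable fun n : ℕ => r ^ (c * |((n:ℤ):ℝ)| ^ p) :=
    hsum.comp_injective fun x y h => by exact_mod_cast h
  have key2 : ∀ n : ℕ, |((((n+1:ℕ)):ℤ):ℝ)| = (n:ℝ)+1 := by
    intro n; push_cast; rw [abs_of_nonneg (by positivity)]
  have key3 : ∀ n : ℕ, |(((-((n:ℤ)+1) : ℤ)):ℝ)| = (n:ℝ)+1 := by
    intro n; push_cast; rw [abs_neg, abs_of_nonneg (by positivity)]
  have hg : Summable fun k : ℕ => r ^ (c * ((k:ℝ) + 1) ^ p) := by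
    have h1 := (summable_nat_add_iff (f := fun n : ℕ => r ^ (c * |((n:ℤ):ℝ)| ^ p)) 1).mpr hnat
    refine h1.congr fun n => ?_
    rw [key2]
  have hneg : Summable fun n : ℕ => r ^ (c * |(((-((n:ℤ)+1) : ℤ)):ℝ)| ^ p) := by
    refine hg.congr fun n => ?_
    rw [key3]
  rw [tsum_of_nat_of_neg_add_one hnat hneg]
  rw [Summable.tsum_eq_zero_add hnat]
  have h0 : r ^ (c * |(((0:ℕ):ℤ):ℝ)| ^ p) = 1 := by
    norm_num [Real.zero_rpow hp.ne']
  rw [h0]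
  have e1 : ∑' n : ℕ, r ^ (c * |((((n+1:ℕ):ℤ)):ℝ)| ^ p) = ∑' k : ℕ, r ^ (c * ((k:ℝ) + 1) ^ p) := by
    refine tsum_congr fun n => ?_
    rw [key2]
  have e2 : ∑' n : ℕ, r ^ (c * |(((-((n:ℤ)+1) : ℤ)):ℝ)| ^ p) = ∑' k : ℕ, r ^ (c * ((k:ℝ) + 1) ^ p) := by
    refine tsum_congr fun n => ?_
    rw [key3]
  rw [e1, e2]
  ring

set_option maxHeartbeats 1000000 in
lemma aux_pi (s : ℕ) (g : Fin s → ℤ → ℝ) (hpos : ∀ j k, 0 ≤ g j k)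
    (hsum : ∀ j, Summable (g j)) :
    Summable (fun h : Fin s → ℤ => ∏ j, g j (h j)) ∧
      (∑' h : Fin s → ℤ, ∏ j, g j (h j)) = ∏ j, ∑' k, g j k := by
  induction s with
  | zero =>
    haveI : Unique (Fin 0 → ℤ) := ⟨⟨fun j => j.elim0⟩, fun f => funext fun j => j.elim0⟩
    constructor
    · exact summable_of_finite_support (Set.toFinite _)
    · simp only [Finset.univ_eq_empty, Finset.prod_empty]
      exact tsum_eq_single default fun b hb => absurd (Subsingleton.elim b default) hb
  | succ t ih =>
    obtain ⟨ihS, ihT⟩ := ih (fun j => g j.succ) (fun j k => hpos j.succ k) (fun j => hsum j.succ)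
    set F : ℤ × (Fin t → ℤ) → ℝ := fun p => g 0 p.1 * ∏ j, g j.succ (p.2 j) with hF
    have hSF : Summable F := by
      rw [hF]
      apply Summable.mul_of_nonneg (hsum 0) ihS
      · exact fun k => hpos 0 k
      · exact fun y => Finset.prod_nonneg fun j _ => hpos j.succ (y j)
    have hcomp : (fun h : Fin (t+1) → ℤ => ∏ j, g j (h j)) = F ∘ (Fin.consEquiv (fun _ : Fin (t+1) => ℤ)).symm := by
      funext h
      simp only [hF, Function.comp_apply, Fin.consEquiv_symm_apply, Fin.tail]
      rw [Fin.prod_univ_succ]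
    constructor
    · rw [hcomp]
      exact hSF.comp_injective (Fin.consEquiv (fun _ : Fin (t+1) => ℤ)).symm.injective
    · rw [hcomp]
      have h1 : ∑' h : Fin (t+1) → ℤ, (F ∘ (Fin.consEquiv (fun _ : Fin (t+1) => ℤ)).symm) h = ∑' p, F p :=
        (Fin.consEquiv (fun _ : Fin (t+1) => ℤ)).symm.tsum_eq F
      rw [h1, hF]
      rw [← Summable.tsum_mul_tsum (hsum 0) ihS hSF, ihT, Fin.prod_univ_succ]

set_option maxHeartbeats 1000000 in
lemma main_aux {s : ℕ} (m : Fin s → ℕ) (hm : ∀ j, 0 < m j) (hi : Fin s → ℤ)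
    (g G : Fin s → ℤ → ℝ)
    (hgpos : ∀ j t, 0 ≤ g j t) (hGpos : ∀ j t, 0 ≤ G j t)
    (hgsum : ∀ j, Summable (g j)) (hGsum : ∀ j, Summable (G j))
    (hG0 : ∀ j, G j 0 = 1)
    (hbound : ∀ (j : Fin s) (v k : ℤ), hi j - m j < v → v ≤ hi j →
      g j (v + m j * k) ≤ G j k) :
    (∑' h : {h : Fin s → ℤ // ¬ ∀ j, hi j - m j < h j ∧ h j ≤ hi j}, ∏ j, g j (h.1 j)) ≤
      (∏ j, (m j : ℝ)) * (-1 + ∏ j, ∑' t : ℤ, G j t) := by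
  classical
  obtain ⟨Sf, -⟩ := aux_pi s g hgpos hgsum
  obtain ⟨ST, hTt⟩ := aux_pi s G hGpos hGsum
  have exdecomp : ∀ h : Fin s → ℤ, ∃ k : Fin s → ℤ, ∀ j,
      hi j - m j < h j - m j * k j ∧ h j - m j * k j ≤ hi j := by
    intro h
    refine ⟨fun j => (h j + ((m j:ℤ) - 1 - hi j)) / (m j), fun j => ?_⟩
    dsimp only
    have hm' : (0:ℤ) < m j := by exact_mod_cast hm j
    have h1 := Int.mul_ediv_add_emod (h j + ((m j:ℤ) - 1 - hi j)) (m j)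
    have h2 := Int.emod_nonneg (h j + ((m j:ℤ) - 1 - hi j)) (ne_of_gt hm')
    have h3 := Int.emod_lt_of_pos (h j + ((m j:ℤ) - 1 - hi j)) hm'
    constructor <;> linarith
  choose kf hkf using exdecomp
  haveI fV : Fintype {v : Fin s → ℤ // ∀ j, v j ∈ Finset.Ioc (hi j - m j) (hi j)} :=
    Fintype.ofEquiv (∀ j, {t : ℤ // t ∈ Finset.Ioc (hi j - m j) (hi j)})
      Equiv.subtypePiEquivPi.symm
  have hcard : Fintype.card {v : Fin s → ℤ // ∀ j, v j ∈ Finset.Ioc (hi j - m j) (hi j)}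
      = ∏ j, m j := by
    rw [Fintype.card_congr
      (Equiv.subtypePiEquivPi (p := fun j t => t ∈ Finset.Ioc (hi j - m j) (hi j)))]
    rw [Fintype.card_pi]
    refine Finset.prod_congr rfl fun j _ => ?_
    rw [Fintype.card_coe, Int.card_Ioc]
    have := hm j
    omega
  have hTK : Summable (fun k : {k : Fin s → ℤ // k ≠ 0} => ∏ j, G j (k.1 j)) :=
    ST.subtype _
  have hSg2 : Summable (fun p :
      {v : Fin s → ℤ // ∀ j, v j ∈ Finset.Ioc (hi j - m j) (hi j)} ×
      {k : Fin s → ℤ // k ≠ 0} => ∏ j, G j (p.2.1 j)) := by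
    have h1 : Summable (fun _ : {v : Fin s → ℤ //
        ∀ j, v j ∈ Finset.Ioc (hi j - m j) (hi j)} => (1:ℝ)) :=
      summable_of_finite_support (Set.toFinite _)
    have h2 : Summable (fun p :
        {v : Fin s → ℤ // ∀ j, v j ∈ Finset.Ioc (hi j - m j) (hi j)} ×
        {k : Fin s → ℤ // k ≠ 0} => (1:ℝ) * ∏ j, G j (p.2.1 j)) := by
      apply Summable.mul_of_nonneg h1 hTK
      · exact fun v => zero_le_one
      · exact fun k => Finset.prod_nonneg fun j _ => hGpos j _
    exact h2.congr fun p => one_mul _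
  have hk0 : ∀ h : Fin s → ℤ, ¬ (∀ j, hi j - m j < h j ∧ h j ≤ hi j) → kf h ≠ 0 := by
    intro h hP hk
    apply hP
    intro j
    have h2 := hkf h j
    rw [hk] at h2
    simpa using h2
  have hmem : ∀ h : Fin s → ℤ, ∀ j, h j - m j * kf h j ∈ Finset.Ioc (hi j - m j) (hi j) :=
    fun h j => Finset.mem_Ioc.mpr ⟨(hkf h j).1, (hkf h j).2⟩
  refine le_trans (Summable.tsum_le_tsum_of_inj
      (fun h : {h : Fin s → ℤ // ¬ ∀ j, hi j - m j < h j ∧ h j ≤ hi j} =>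
        ((⟨fun j => h.1 j - m j * kf h.1 j, hmem h.1⟩, ⟨kf h.1, hk0 h.1 h.2⟩) :
          {v : Fin s → ℤ // ∀ j, v j ∈ Finset.Ioc (hi j - m j) (hi j)} ×
          {k : Fin s → ℤ // k ≠ 0}))
      ?_ ?_ ?_ (Sf.subtype _) hSg2) (le_of_eq ?_)
  · rintro ⟨h1, hh1⟩ ⟨h2, hh2⟩ heq
    simp only [Prod.mk.injEq, Subtype.mk.injEq] at heq
    obtain ⟨hv, hk⟩ := heq
    refine Subtype.ext (funext fun j => ?_)
    have e1 := congrFun hv j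
    have e2 := congrFun hk j
    have e3 : (m j : ℤ) * kf h1 j = m j * kf h2 j := by rw [e2]
    show h1 j = h2 j
    linarith
  · exact fun c _ => Finset.prod_nonneg fun j _ => hGpos j _
  · intro h
    refine Finset.prod_le_prod (fun j _ => hgpos j _) (fun j _ => ?_)
    have hb := hbound j (h.1 j - m j * kf h.1 j) (kf h.1 j) (hkf h.1 j).1 (hkf h.1 j).2
    rw [sub_add_cancel] at hb
    exact hb
  · rw [Summable.tsum_prod' hSg2 (fun v => hTK)]
    show (∑' _b : {v : Fin s → ℤ // ∀ j, v j ∈ Finset.Ioc (hi j - (m j : ℤ)) (hi j)},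
        ∑' c : {k : Fin s → ℤ // k ≠ 0}, ∏ j, G j (c.1 j)) = _
    rw [tsum_fintype, Finset.sum_const, Finset.card_univ, hcard, nsmul_eq_mul, Nat.cast_prod]
    congr 1
    have hT0 : (∏ j, G j ((0 : Fin s → ℤ) j)) = 1 := by simp [hG0]
    have h1 := Summable.tsum_eq_add_tsum_ite ST (0 : Fin s → ℤ)
    have h2 : ∑' k : {k : Fin s → ℤ // k ≠ 0}, ∏ j, G j (k.1 j)
        = ∑' k : Fin s → ℤ, if k = 0 then 0 else ∏ j, G j (k j) := by
      refine (tsum_subtype {k : Fin s → ℤ | k ≠ 0} (fun k => ∏ j, G j (k j))).trans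
        (tsum_congr fun k => ?_)
      by_cases hk : k = 0 <;> simp [Set.indicator, hk]
    rw [h2]
    rw [hTt] at h1
    linarith

set_option maxHeartbeats 1000000 in
/-- for the grid fundamental domain
V = {h ∈ ℤ^s : -m_j/2 < h_j ≤ m_j/2 for all j} and n = ∏_j m_j, one has
∑_{h ∈ ℤ^s ∖ V} ω_h ≤ n (-1 + ∏_{j=1}^s (1 + 2∑_{h=1}^∞ (√ω)^{a_j 2^{-b_j}(m_j h)^{b_j}})). -/
theorem stmt13 (ω : ℝ) (hω : ω ∈ Set.Ioo (0:ℝ) 1) (s : ℕ) (hs : 1 ≤ s)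
    (a b : Fin s → ℝ) (ha : ∀ j, 0 < a j) (hb : ∀ j, 0 < b j)
    (m : Fin s → ℕ) (hm : ∀ j, 0 < m j) :
    Summable (fun h : {h : Fin s → ℤ //
        ¬ ∀ j, -((m j : ℝ) / 2) < (h j : ℝ) ∧ (h j : ℝ) ≤ (m j : ℝ) / 2} =>
      ω ^ (∑ j, a j * |(h.1 j : ℝ)| ^ (b j))) ∧
    ∑' h : {h : Fin s → ℤ //
        ¬ ∀ j, -((m j : ℝ) / 2) < (h j : ℝ) ∧ (h j : ℝ) ≤ (m j : ℝ) / 2},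
        ω ^ (∑ j, a j * |(h.1 j : ℝ)| ^ (b j)) ≤
      ((∏ j, m j : ℕ) : ℝ) * (-1 + ∏ j, (1 + 2 * ∑' k : ℕ,
        Real.sqrt ω ^ (a j * (2:ℝ) ^ (-(b j)) * ((m j : ℝ) * ((k : ℝ) + 1)) ^ (b j)))) := by
  obtain ⟨hω0, hω1⟩ := hω
  have hr0 : 0 < Real.sqrt ω := Real.sqrt_pos.mpr hω0
  have hr1 : Real.sqrt ω < 1 := by
    have h := Real.sqrt_lt_sqrt hω0.le hω1
    rwa [Real.sqrt_one] at h
  have hcc : ∀ j, 0 < a j * (2:ℝ) ^ (-(b j)) * (m j : ℝ) ^ (b j) := fun j =>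
    mul_pos (mul_pos (ha j) (Real.rpow_pos_of_pos two_pos _))
      (Real.rpow_pos_of_pos (by exact_mod_cast hm j) _)
  have hfprod : ∀ h : Fin s → ℤ, ω ^ (∑ j, a j * |(h j:ℝ)| ^ (b j))
      = ∏ j, ω ^ (a j * |(h j:ℝ)| ^ (b j)) := by
    intro h
    rw [Real.rpow_def_of_pos hω0, Finset.mul_sum, Real.exp_sum]
    exact Finset.prod_congr rfl fun j _ => (Real.rpow_def_of_pos hω0 _).symm
  have hSf : Summable (fun h : Fin s → ℤ => ω ^ (∑ j, a j * |(h j:ℝ)| ^ (b j))) := by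
    obtain ⟨S, -⟩ := aux_pi s (fun j t => ω ^ (a j * |(t:ℝ)| ^ (b j)))
      (fun j t => Real.rpow_nonneg hω0.le _)
      (fun j => aux_summable_int hω0 hω1 (ha j) (hb j))
    exact S.congr fun h => (hfprod h).symm
  have hle : ∀ (j : Fin s) (v : ℤ), ((v:ℝ) ≤ (m j:ℝ)/2 ↔ v ≤ ((m j / 2 : ℕ) : ℤ)) := by
    intro j v
    rw [le_div_iff₀ (by norm_num : (0:ℝ) < 2)]
    constructor
    · intro h
      have h' : v * 2 ≤ (m j : ℤ) := by exact_mod_cast h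
      omega
    · intro h
      have h' : v * 2 ≤ (m j : ℤ) := by omega
      exact_mod_cast h'
  have hlt : ∀ (j : Fin s) (v : ℤ),
      (-((m j:ℝ)/2) < v ↔ ((m j / 2 : ℕ) : ℤ) - (m j : ℤ) < v) := by
    intro j v
    rw [neg_lt, lt_div_iff₀ (by norm_num : (0:ℝ) < 2)]
    constructor
    · intro h
      have h' : -v * 2 < (m j : ℤ) := by exact_mod_cast h
      omega
    · intro h
      have h' : -v * 2 < (m j : ℤ) := by omega
      exact_mod_cast h'
  constructor
  · exact hSf.subtype _
  · have hbound : ∀ (j : Fin s) (v k : ℤ),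
        ((m j / 2 : ℕ) : ℤ) - (m j : ℤ) < v → v ≤ ((m j / 2 : ℕ) : ℤ) →
        ω ^ (a j * |((v + (m j : ℤ) * k : ℤ):ℝ)| ^ (b j)) ≤
          Real.sqrt ω ^ (a j * (2:ℝ) ^ (-(b j)) * (m j : ℝ) ^ (b j) * |(k:ℝ)| ^ (b j)) := by
      intro j v k hv1 hv2
      have hm' : (0:ℝ) < m j := by exact_mod_cast hm j
      have hvle : (v:ℝ) ≤ (m j:ℝ)/2 := (hle j v).mpr hv2
      have hvgt : -((m j:ℝ)/2) < v := (hlt j v).mpr hv1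
      have habs : (m j:ℝ) * |(k:ℝ)| / 2 ≤ |((v + (m j : ℤ) * k : ℤ):ℝ)| := by
        push_cast
        rcases eq_or_ne k 0 with rfl | hk
        · simp
        · have hk1 : (1:ℝ) ≤ |(k:ℝ)| := by
            rw [← Int.cast_abs]
            exact_mod_cast Int.one_le_abs hk
          have h1 : |(m j:ℝ) * k| - |(v:ℝ)| ≤ |(v:ℝ) + (m j:ℝ) * k| := by
            have h2 := abs_sub_abs_le_abs_sub ((m j:ℝ) * k) (-(v:ℝ))
            rw [abs_neg, sub_neg_eq_add, add_comm] at h2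
            exact h2
          have h2 : |(m j:ℝ) * k| = (m j:ℝ) * |(k:ℝ)| := by
            rw [abs_mul, abs_of_nonneg hm'.le]
          have h3 : |(v:ℝ)| ≤ (m j:ℝ)/2 := abs_le.mpr ⟨by linarith, hvle⟩
          nlinarith [mul_le_mul_of_nonneg_left hk1 hm'.le]
      have hrpow1 : ((m j:ℝ) * |(k:ℝ)| / 2) ^ (b j)
          ≤ |((v + (m j : ℤ) * k : ℤ):ℝ)| ^ (b j) :=
        Real.rpow_le_rpow (by positivity) habs (hb j).le
      have hfac : ((m j:ℝ) * |(k:ℝ)| / 2) ^ (b j)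
          = (2:ℝ) ^ (-(b j)) * (m j:ℝ) ^ (b j) * |(k:ℝ)| ^ (b j) := by
        rw [Real.div_rpow (by positivity) (by norm_num : (0:ℝ) ≤ 2),
          Real.mul_rpow hm'.le (abs_nonneg _), Real.rpow_neg (by norm_num : (0:ℝ) ≤ 2)]
        ring
      have hexp : a j * (2:ℝ) ^ (-(b j)) * (m j : ℝ) ^ (b j) * |(k:ℝ)| ^ (b j)
          ≤ a j * |((v + (m j : ℤ) * k : ℤ):ℝ)| ^ (b j) := by
        have h4 := mul_le_mul_of_nonneg_left hrpow1 (ha j).le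
        calc a j * (2:ℝ) ^ (-(b j)) * (m j : ℝ) ^ (b j) * |(k:ℝ)| ^ (b j)
            = a j * (((m j:ℝ) * |(k:ℝ)| / 2) ^ (b j)) := by rw [hfac]; ring
          _ ≤ a j * |((v + (m j : ℤ) * k : ℤ):ℝ)| ^ (b j) := h4
      have hy : 0 ≤ a j * (2:ℝ) ^ (-(b j)) * (m j : ℝ) ^ (b j) * |(k:ℝ)| ^ (b j) :=
        mul_nonneg (hcc j).le (Real.rpow_nonneg (abs_nonneg _) _)
      calc ω ^ (a j * |((v + (m j : ℤ) * k : ℤ):ℝ)| ^ (b j))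
          ≤ ω ^ (a j * (2:ℝ) ^ (-(b j)) * (m j : ℝ) ^ (b j) * |(k:ℝ)| ^ (b j)) :=
            Real.rpow_le_rpow_of_exponent_ge hω0 hω1.le hexp
        _ = Real.sqrt ω ^ (a j * (2:ℝ) ^ (-(b j)) * (m j : ℝ) ^ (b j) * |(k:ℝ)| ^ (b j)) *
            Real.sqrt ω ^ (a j * (2:ℝ) ^ (-(b j)) * (m j : ℝ) ^ (b j) * |(k:ℝ)| ^ (b j)) := by
            rw [← Real.mul_rpow hr0.le hr0.le, Real.mul_self_sqrt hω0.le]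
        _ ≤ Real.sqrt ω ^ (a j * (2:ℝ) ^ (-(b j)) * (m j : ℝ) ^ (b j) * |(k:ℝ)| ^ (b j)) := by
            have hle1 : Real.sqrt ω ^ (a j * (2:ℝ) ^ (-(b j)) * (m j : ℝ) ^ (b j) * |(k:ℝ)| ^ (b j)) ≤ 1 :=
              Real.rpow_le_one hr0.le hr1.le hy
            nlinarith [Real.rpow_nonneg hr0.le
              (a j * (2:ℝ) ^ (-(b j)) * (m j : ℝ) ^ (b j) * |(k:ℝ)| ^ (b j))]
    have hmain := main_aux m hm (fun j => ((m j / 2 : ℕ) : ℤ))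
      (fun j t => ω ^ (a j * |(t:ℝ)| ^ (b j)))
      (fun j t => Real.sqrt ω ^ (a j * (2:ℝ) ^ (-(b j)) * (m j : ℝ) ^ (b j) * |(t:ℝ)| ^ (b j)))
      (fun j t => Real.rpow_nonneg hω0.le _)
      (fun j t => Real.rpow_nonneg hr0.le _)
      (fun j => aux_summable_int hω0 hω1 (ha j) (hb j))
      (fun j => aux_summable_int hr0 hr1 (hcc j) (hb j))
      (fun j => by norm_num [Real.zero_rpow (hb j).ne'])
      hbound
    calc ∑' h : {h : Fin s → ℤ //
          ¬ ∀ j, -((m j : ℝ) / 2) < (h j : ℝ) ∧ (h j : ℝ) ≤ (m j : ℝ) / 2},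
          ω ^ (∑ j, a j * |(h.1 j : ℝ)| ^ (b j))
        = ∑' h : {h : Fin s → ℤ //
          ¬ ∀ j, ((m j / 2 : ℕ) : ℤ) - (m j : ℤ) < h j ∧ h j ≤ ((m j / 2 : ℕ) : ℤ)},
          ω ^ (∑ j, a j * |(h.1 j : ℝ)| ^ (b j)) :=
          Equiv.tsum_eq (Equiv.subtypeEquivRight (fun (h : Fin s → ℤ) => not_congr (forall_congr' fun j =>
            and_congr (hlt j (h j)) (hle j (h j)))))
            (fun h => ω ^ (∑ j, a j * |(h.1 j : ℝ)| ^ (b j)))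
      _ = ∑' h : {h : Fin s → ℤ //
          ¬ ∀ j, ((m j / 2 : ℕ) : ℤ) - (m j : ℤ) < h j ∧ h j ≤ ((m j / 2 : ℕ) : ℤ)},
          ∏ j, ω ^ (a j * |(h.1 j : ℝ)| ^ (b j)) := tsum_congr fun h => hfprod h.1
      _ ≤ (∏ j, (m j : ℝ)) * (-1 + ∏ j, ∑' t : ℤ,
          Real.sqrt ω ^ (a j * (2:ℝ) ^ (-(b j)) * (m j : ℝ) ^ (b j) * |(t:ℝ)| ^ (b j))) := hmain
      _ = ((∏ j, m j : ℕ) : ℝ) * (-1 + ∏ j, (1 + 2 * ∑' k : ℕ,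
          Real.sqrt ω ^ (a j * (2:ℝ) ^ (-(b j)) * ((m j : ℝ) * ((k : ℝ) + 1)) ^ (b j)))) := by
          congr 1
          · rw [Nat.cast_prod]
          · congr 1
            refine Finset.prod_congr rfl fun j _ => ?_
            rw [aux_tsum_int hr0 hr1 (hcc j) (hb j)]
            congr 2
            refine tsum_congr fun k => ?_
            congr 1
            rw [Real.mul_rpow (by positivity) (by positivity)]
            ring
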